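/- A real-valued function f on the effects that is additive and homogeneous over nonnegative reals extends uniquely to a real-linear functional on the real vector space of Hermitian operators. -/

import Mathlib

open Matrix Finset ComplexOrder

def IsEffect {d : ℕ} (E : Matrix (Fin d) (Fin d) ℂ) : Prop :=
  E.PosSemidef ∧ (1 - E).PosSemidef

def IsFrameFunction {d : ℕ} (f : Matrix (Fin d) (Fin d) ℂ → ℝ) : Prop :=
  (∀ E, IsEffect E → f E ∈ Set.Icc (0 : ℝ) 1) ∧
  ∀ (n : ℕ) (E : Fin n → Matrix (Fin d) (Fin d) ℂ),
    (∀ j, IsEffect (E j)) → (∑ j, E j = 1) → ∑ j, f (E j) = 1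

noncomputable def hsNorm {d : ℕ} (A : Matrix (Fin d) (Fin d) ℂ) : ℝ :=
  Real.sqrt ((Aᴴ * A).trace.re)

def IsProjection {d : ℕ} (P : Matrix (Fin d) (Fin d) ℂ) : Prop :=
  P.IsHermitian ∧ P * P = P
namespace GleasonExt

variable {d : ℕ}

lemma smulPSD {A : Matrix (Fin d) (Fin d) ℂ} (hA : A.PosSemidef) {t : ℝ} (ht : 0 ≤ t) :
    (t • A).PosSemidef := by
  refine ⟨?_, fun x => ?_⟩
  · unfold Matrix.IsHermitian
    rw [Matrix.conjTranspose_smul, hA.1, star_trivial]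
  · exact (hA.smul ht).2 x

lemma conj_diag {A : Matrix (Fin d) (Fin d) ℂ} (hA : A.IsHermitian) (r s : ℝ) :
    (hA.eigenvectorUnitary : Matrix (Fin d) (Fin d) ℂ) *
      Matrix.diagonal (fun i => ((r + s * hA.eigenvalues i : ℝ) : ℂ)) *
      star (hA.eigenvectorUnitary : Matrix (Fin d) (Fin d) ℂ)
    = r • (1 : Matrix (Fin d) (Fin d) ℂ) + s • A := by
  have hU : (hA.eigenvectorUnitary : Matrix (Fin d) (Fin d) ℂ) *
      star (hA.eigenvectorUnitary : Matrix (Fin d) (Fin d) ℂ) = 1 :=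
    Matrix.mem_unitaryGroup_iff.mp hA.eigenvectorUnitary.2
  have hD : Matrix.diagonal (fun i => ((r + s * hA.eigenvalues i : ℝ) : ℂ))
      = r • (1 : Matrix (Fin d) (Fin d) ℂ)
        + s • Matrix.diagonal ((RCLike.ofReal ∘ hA.eigenvalues : Fin d → ℂ)) := by
    ext i j
    rcases eq_or_ne i j with h | h
    · subst h
      simp [Matrix.diagonal_apply_eq, Matrix.one_apply_eq, Complex.real_smul]
    · simp [Matrix.diagonal_apply_ne _ h, Matrix.one_apply_ne h]
  rw [hD, mul_add, add_mul]
  simp only [mul_smul_comm, smul_mul_assoc, mul_one, hU]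
  conv_rhs => rw [hA.spectral_theorem, Unitary.conjStarAlgAut_apply]

lemma psd_conj {A : Matrix (Fin d) (Fin d) ℂ} (hA : A.IsHermitian) (r s : ℝ)
    (h : ∀ i, 0 ≤ r + s * hA.eigenvalues i) :
    (r • (1 : Matrix (Fin d) (Fin d) ℂ) + s • A).PosSemidef := by
  rw [← conj_diag hA r s]
  have hd : (Matrix.diagonal (fun i => ((r + s * hA.eigenvalues i : ℝ) : ℂ))).PosSemidef :=
    Matrix.PosSemidef.diagonal fun i => Complex.zero_le_real.mpr (h i)
  simpa [Matrix.star_eq_conjTranspose] using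
    hd.mul_mul_conjTranspose_same (hA.eigenvectorUnitary : Matrix (Fin d) (Fin d) ℂ)

lemma exists_smul_effect {A : Matrix (Fin d) (Fin d) ℂ} (hA : A.PosSemidef) :
    ∃ t : ℝ, 0 < t ∧ IsEffect (t • A) := by
  set l := hA.1.eigenvalues with hl
  have hln : ∀ i, 0 ≤ l i := fun i => hA.eigenvalues_nonneg i
  set c : ℝ := 1 + ∑ i, l i with hc
  have hsum : 0 ≤ ∑ i, l i := Finset.sum_nonneg fun i _ => hln i
  have hcpos : 0 < c := by rw [hc]; linarith
  refine ⟨c⁻¹, inv_pos.mpr hcpos, smulPSD hA (inv_pos.mpr hcpos).le, ?_⟩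
  have hpsd : (c • (1 : Matrix (Fin d) (Fin d) ℂ) + (-1 : ℝ) • A).PosSemidef := by
    refine psd_conj hA.1 c (-1) fun i => ?_
    have h1 : l i ≤ ∑ j, l j := Finset.single_le_sum (fun j _ => hln j) (Finset.mem_univ i)
    simp only [neg_one_mul]
    rw [hc]; linarith
  have key : (1 : Matrix (Fin d) (Fin d) ℂ) - c⁻¹ • A
      = c⁻¹ • (c • (1 : Matrix (Fin d) (Fin d) ℂ) + (-1 : ℝ) • A) := by
    rw [smul_add, smul_smul, smul_smul, inv_mul_cancel₀ hcpos.ne', one_smul]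
    simp [sub_eq_add_neg]
  rw [key]
  exact smulPSD hpsd (inv_pos.mpr hcpos).le

lemma exists_decomp {A : Matrix (Fin d) (Fin d) ℂ} (hA : A.IsHermitian) :
    ∃ P N : Matrix (Fin d) (Fin d) ℂ, P.PosSemidef ∧ N.PosSemidef ∧ A = P - N := by
  set c : ℝ := ∑ i, |hA.eigenvalues i| with hc
  have hcn : 0 ≤ c := Finset.sum_nonneg fun i _ => abs_nonneg _
  refine ⟨c • 1 + (1 : ℝ) • A, c • 1, ?_, ?_, ?_⟩
  · refine psd_conj hA c 1 fun i => ?_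
    have h1 : |hA.eigenvalues i| ≤ c :=
      Finset.single_le_sum (f := fun j => |hA.eigenvalues j|) (fun j _ => abs_nonneg _) (Finset.mem_univ i)
    have := neg_abs_le (hA.eigenvalues i)
    linarith
  · exact smulPSD Matrix.PosSemidef.one hcn
  · simp

end GleasonExt

open Classical in
noncomputable def gleasonG {d : ℕ} (f : Matrix (Fin d) (Fin d) ℂ → ℝ)
    (A : Matrix (Fin d) (Fin d) ℂ) : ℝ :=
  if h : ∃ t : ℝ, 0 < t ∧ IsEffect (t • A) then h.choose⁻¹ * f (h.choose • A) else 0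

namespace GleasonExt

variable {d : ℕ} {f : Matrix (Fin d) (Fin d) ℂ → ℝ}
variable (hhom : ∀ (E : Matrix (Fin d) (Fin d) ℂ) (α : ℝ), 0 ≤ α →
      IsEffect E → IsEffect (α • E) → f (α • E) = α * f E)
variable (hadd : ∀ E₁ E₂ : Matrix (Fin d) (Fin d) ℂ,
      IsEffect E₁ → IsEffect E₂ → IsEffect (E₁ + E₂) →
      f (E₁ + E₂) = f E₁ + f E₂)

include hhom in
lemma wd (A : Matrix (Fin d) (Fin d) ℂ) {s t : ℝ} (hs : 0 < s) (ht : 0 < t)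
    (hse : IsEffect (s • A)) (hte : IsEffect (t • A)) :
    s⁻¹ * f (s • A) = t⁻¹ * f (t • A) := by
  have hst : (s / t) • (t • A) = s • A := by
    rw [smul_smul, div_mul_cancel₀ _ ht.ne']
  have := hhom (t • A) (s / t) (by positivity) hte (by rwa [hst])
  rw [hst] at this
  rw [this]
  field_simp

include hhom in
lemma g_eq (A : Matrix (Fin d) (Fin d) ℂ) {t : ℝ} (ht : 0 < t) (hte : IsEffect (t • A)) :
    gleasonG f A = t⁻¹ * f (t • A) := by
  have h : ∃ u : ℝ, 0 < u ∧ IsEffect (u • A) := ⟨t, ht, hte⟩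
  rw [gleasonG, dif_pos h]
  exact wd hhom A h.choose_spec.1 ht h.choose_spec.2 hte

lemma effect_zero : IsEffect (0 : Matrix (Fin d) (Fin d) ℂ) :=
  ⟨Matrix.PosSemidef.zero, by rw [sub_zero]; exact Matrix.PosSemidef.one⟩

include hadd in
lemma f_zero : f 0 = 0 := by
  have := hadd 0 0 effect_zero effect_zero (by rw [add_zero]; exact effect_zero)
  rw [add_zero] at this
  linarith

include hhom hadd in
lemma g_zero : gleasonG f (0 : Matrix (Fin d) (Fin d) ℂ) = 0 := by
  have h1 : IsEffect ((1:ℝ) • (0 : Matrix (Fin d) (Fin d) ℂ)) := by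
    rw [one_smul]; exact effect_zero
  rw [g_eq hhom 0 one_pos h1, one_smul, f_zero hadd]
  ring

include hhom in
lemma g_effect {E : Matrix (Fin d) (Fin d) ℂ} (hE : IsEffect E) : gleasonG f E = f E := by
  have h1 : IsEffect ((1:ℝ) • E) := by rwa [one_smul]
  rw [g_eq hhom E one_pos h1, one_smul, inv_one, one_mul]

include hhom hadd in
lemma g_add {A B : Matrix (Fin d) (Fin d) ℂ} (hA : A.PosSemidef) (hB : B.PosSemidef) :
    gleasonG f (A + B) = gleasonG f A + gleasonG f B := by
  obtain ⟨t, ht, hte⟩ := exists_smul_effect (hA.add hB)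
  have htAB : t • (A + B) = t • A + t • B := smul_add t A B
  have heA : IsEffect (t • A) := by
    refine ⟨smulPSD hA ht.le, ?_⟩
    have : (1 : Matrix (Fin d) (Fin d) ℂ) - t • A = (1 - t • (A + B)) + t • B := by
      rw [htAB]; abel
    rw [this]
    exact hte.2.add (smulPSD hB ht.le)
  have heB : IsEffect (t • B) := by
    refine ⟨smulPSD hB ht.le, ?_⟩
    have : (1 : Matrix (Fin d) (Fin d) ℂ) - t • B = (1 - t • (A + B)) + t • A := by
      rw [htAB]; abel
    rw [this]
    exact hte.2.add (smulPSD hA ht.le)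
  rw [g_eq hhom (A + B) ht hte, g_eq hhom A ht heA, g_eq hhom B ht heB, htAB,
    hadd _ _ heA heB (htAB ▸ hte)]
  ring

include hhom hadd in
lemma g_smul {A : Matrix (Fin d) (Fin d) ℂ} (hA : A.PosSemidef) {α : ℝ} (hα : 0 ≤ α) :
    gleasonG f (α • A) = α * gleasonG f A := by
  rcases eq_or_lt_of_le hα with h | h
  · rw [← h, zero_smul, g_zero hhom hadd, zero_mul]
  · obtain ⟨t, ht, hte⟩ := exists_smul_effect (smulPSD hA hα)
    have hta : (t * α) • A = t • (α • A) := by rw [smul_smul]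
    have h2 : IsEffect ((t * α) • A) := by rwa [hta]
    rw [g_eq hhom (α • A) ht hte, g_eq hhom A (by positivity) h2, hta]
    field_simp

include hhom hadd in
lemma g_wd {P N P' N' : Matrix (Fin d) (Fin d) ℂ} (hP : P.PosSemidef) (hN : N.PosSemidef)
    (hP' : P'.PosSemidef) (hN' : N'.PosSemidef) (h : P - N = P' - N') :
    gleasonG f P - gleasonG f N = gleasonG f P' - gleasonG f N' := by
  have h2 : P + N' = P' + N := sub_eq_sub_iff_add_eq_add.mp h
  have e1 := g_add hhom hadd hP hN'
  have e2 := g_add hhom hadd hP' hN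
  rw [h2, e2] at e1
  linarith

end GleasonExt

theorem additive_homogeneous_extends_to_linear {d : ℕ}
    (f : Matrix (Fin d) (Fin d) ℂ → ℝ)
    (hadd : ∀ E₁ E₂ : Matrix (Fin d) (Fin d) ℂ,
      IsEffect E₁ → IsEffect E₂ → IsEffect (E₁ + E₂) →
      f (E₁ + E₂) = f E₁ + f E₂)
    (hhom : ∀ (E : Matrix (Fin d) (Fin d) ℂ) (α : ℝ), 0 ≤ α →
      IsEffect E → IsEffect (α • E) → f (α • E) = α * f E) :
    ∃! L : selfAdjoint (Matrix (Fin d) (Fin d) ℂ) →ₗ[ℝ] ℝ,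
      ∀ (E : Matrix (Fin d) (Fin d) ℂ) (hE : IsEffect E),
        L ⟨E, hE.1.1⟩ = f E := by
  classical
  have hdec : ∀ A : selfAdjoint (Matrix (Fin d) (Fin d) ℂ),
      ∃ P N : Matrix (Fin d) (Fin d) ℂ, P.PosSemidef ∧ N.PosSemidef ∧
        (A : Matrix (Fin d) (Fin d) ℂ) = P - N :=
    fun A => GleasonExt.exists_decomp A.2
  choose P N hP hN hPN using hdec
  let L0 : selfAdjoint (Matrix (Fin d) (Fin d) ℂ) → ℝ :=
    fun A => gleasonG f (P A) - gleasonG f (N A)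
  have hL0 : ∀ (A : selfAdjoint (Matrix (Fin d) (Fin d) ℂ)) (P' N' : Matrix (Fin d) (Fin d) ℂ),
      P'.PosSemidef → N'.PosSemidef → (A : Matrix (Fin d) (Fin d) ℂ) = P' - N' →
      L0 A = gleasonG f P' - gleasonG f N' := by
    intro A P' N' h1 h2 h3
    exact GleasonExt.g_wd hhom hadd (hP A) (hN A) h1 h2 (by rw [← hPN A, ← h3])
  have hpsdval : ∀ (B : Matrix (Fin d) (Fin d) ℂ) (hB : B.PosSemidef),
      L0 ⟨B, hB.1⟩ = gleasonG f B := by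
    intro B hB
    have := hL0 ⟨B, hB.1⟩ B 0 hB Matrix.PosSemidef.zero (by simp)
    rwa [GleasonExt.g_zero hhom hadd, sub_zero] at this
  have hadd' : ∀ A B : selfAdjoint (Matrix (Fin d) (Fin d) ℂ), L0 (A + B) = L0 A + L0 B := by
    intro A B
    have hco : ((A + B : selfAdjoint (Matrix (Fin d) (Fin d) ℂ)) : Matrix (Fin d) (Fin d) ℂ)
        = (P A + P B) - (N A + N B) := by
      push_cast
      rw [hPN A, hPN B]; abel
    rw [hL0 _ _ _ ((hP A).add (hP B)) ((hN A).add (hN B)) hco,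
      GleasonExt.g_add hhom hadd (hP A) (hP B), GleasonExt.g_add hhom hadd (hN A) (hN B)]
    show _ = (gleasonG f (P A) - gleasonG f (N A)) + (gleasonG f (P B) - gleasonG f (N B))
    ring
  have hsmul' : ∀ (α : ℝ) (A : selfAdjoint (Matrix (Fin d) (Fin d) ℂ)),
      L0 (α • A) = α * L0 A := by
    intro α A
    rcases le_or_gt 0 α with hα | hα
    · have hco : ((α • A : selfAdjoint (Matrix (Fin d) (Fin d) ℂ)) : Matrix (Fin d) (Fin d) ℂ)
          = α • P A - α • N A := by
        rw [selfAdjoint.val_smul, hPN A, smul_sub]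
      rw [hL0 _ _ _ (GleasonExt.smulPSD (hP A) hα) (GleasonExt.smulPSD (hN A) hα) hco,
        GleasonExt.g_smul hhom hadd (hP A) hα, GleasonExt.g_smul hhom hadd (hN A) hα]
      show _ = α * (gleasonG f (P A) - gleasonG f (N A))
      ring
    · have hα' : 0 ≤ -α := by linarith
      have hco : ((α • A : selfAdjoint (Matrix (Fin d) (Fin d) ℂ)) : Matrix (Fin d) (Fin d) ℂ)
          = (-α) • N A - (-α) • P A := by
        rw [selfAdjoint.val_smul, hPN A, smul_sub]
        module
      rw [hL0 _ _ _ (GleasonExt.smulPSD (hN A) hα') (GleasonExt.smulPSD (hP A) hα') hco,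
        GleasonExt.g_smul hhom hadd (hN A) hα', GleasonExt.g_smul hhom hadd (hP A) hα']
      show _ = α * (gleasonG f (P A) - gleasonG f (N A))
      ring
  refine ⟨{ toFun := L0, map_add' := hadd', map_smul' := hsmul' }, ?_, ?_⟩
  · intro E hE
    show L0 ⟨E, hE.1.1⟩ = f E
    rw [hpsdval E hE.1, GleasonExt.g_effect hhom hE]
  · intro L' hL'
    have key : ∀ (B : Matrix (Fin d) (Fin d) ℂ) (hB : B.PosSemidef),
        L' ⟨B, hB.1⟩ = gleasonG f B := by
      intro B hB
      obtain ⟨t, ht, hte⟩ := GleasonExt.exists_smul_effect hB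
      have hsub : (⟨B, hB.1⟩ : selfAdjoint (Matrix (Fin d) (Fin d) ℂ))
          = t⁻¹ • (⟨t • B, (GleasonExt.smulPSD hB ht.le).1⟩ :
              selfAdjoint (Matrix (Fin d) (Fin d) ℂ)) := by
        apply Subtype.ext
        rw [selfAdjoint.val_smul]
        show B = t⁻¹ • (t • B)
        rw [smul_smul, inv_mul_cancel₀ ht.ne', one_smul]
      rw [hsub, L'.map_smul, smul_eq_mul]
      have h1 : L' (⟨t • B, (GleasonExt.smulPSD hB ht.le).1⟩ :
          selfAdjoint (Matrix (Fin d) (Fin d) ℂ)) = f (t • B) := hL' (t • B) hte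
      rw [h1, GleasonExt.g_eq hhom B ht hte]
    ext A
    have hA : A = (⟨P A, (hP A).1⟩ : selfAdjoint (Matrix (Fin d) (Fin d) ℂ))
        - ⟨N A, (hN A).1⟩ := by
      apply Subtype.ext
      push_cast
      exact hPN A
    have h2 := congrArg L' hA
    rw [map_sub] at h2
    rw [h2, key _ (hP A), key _ (hN A)]
    rfl
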